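/- Let F : ℝ^n × ℝ^m → ℝ^n define the discrete-time system x(k+1) = F(x(k), u(k)). Suppose there exist a function V : ℝ^n × ℝ^n → ℝ≥0, functions ξ1, ξ2, ξ : ℝ≥0 → ℝ≥0 of class K∞ (continuous, strictly increasing, vanishing at 0, and tending to ∞) and a function σ : ℝ≥0 → ℝ≥0 of class K (continuous, strictly increasing, vanishing at 0) such that for all x1, x2 ∈ ℝ^n and u1, u2 ∈ ℝ^m: (i) ξ1(‖x1 − x2‖) ≤ V(x1, x2) ≤ ξ2(‖x1 − x2‖), and (ii) V(F(x1, u1), F(x2, u2)) − V(x1, x2) ≤ −ξ(‖x1 − x2‖) + σ(‖u1 − u2‖). Then the system is incrementally input-to-state stable (δISS). -/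

import Mathlib

open Matrix Filter

/-- Euclidean norm of a finitely-indexed real vector. -/
noncomputable def eNorm {ι : Type*} [Fintype ι] (v : ι → ℝ) : ℝ :=
  Real.sqrt (∑ i, (v i) ^ 2)

/-- Class `K` function: continuous and strictly increasing on `[0,∞)`, vanishing at `0`. -/
def IsKFun (γ : ℝ → ℝ) : Prop :=
  ContinuousOn γ (Set.Ici 0) ∧ StrictMonoOn γ (Set.Ici 0) ∧ γ 0 = 0

/-- Class `K∞` function: class `K` and unbounded. -/
def IsKInfFun (γ : ℝ → ℝ) : Prop :=
  IsKFun γ ∧ Tendsto γ atTop atTop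

/-- Class `KL` function. -/
def IsKLFun (β : ℝ → ℕ → ℝ) : Prop :=
  (∀ k, ContinuousOn (fun s => β s k) (Set.Ici 0)) ∧
  (∀ k, StrictMonoOn (fun s => β s k) (Set.Ici 0)) ∧
  (∀ k, β 0 k = 0) ∧
  (∀ s : ℝ, 0 < s → StrictAnti (fun k => β s k)) ∧
  (∀ s : ℝ, 0 < s → Tendsto (fun k => β s k) atTop (nhds 0))

/-- Solution of the discrete-time recursion `x(k+1) = F (x k) (u k)` from `x0`. -/
def traj {σ υ : Type*} (F : σ → υ → σ) (x0 : σ) (u : ℕ → υ) : ℕ → σ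
  | 0 => x0
  | k + 1 => F (traj F x0 u k) (u k)

/-- Incremental input-to-state stability (δISS) of `x(k+1) = F(x(k), u(k))`. -/
def DeltaISS {ι κ : Type*} [Fintype ι] [Fintype κ]
    (F : (ι → ℝ) → (κ → ℝ) → (ι → ℝ)) : Prop :=
  ∃ β : ℝ → ℕ → ℝ, ∃ γ : ℝ → ℝ, IsKLFun β ∧ IsKInfFun γ ∧
    ∀ (k : ℕ) (x01 x02 : ι → ℝ) (d : ℝ), 0 ≤ d →
      ∀ u1 u2 : ℕ → κ → ℝ, (∀ j, eNorm (u1 j - u2 j) ≤ d) →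
        eNorm (traj F x01 u1 k - traj F x02 u2 k) ≤ β (eNorm (x01 - x02)) k + γ d

open scoped NNReal

lemma exists_kinf_inverse (f : ℝ → ℝ) (hf : IsKInfFun f) :
    ∃ ψ : ℝ → ℝ, Continuous ψ ∧ Monotone ψ ∧ StrictMonoOn ψ (Set.Ici 0) ∧ ψ 0 = 0 ∧
      (∀ y, 0 ≤ ψ y) ∧ (∀ x, 0 ≤ x → ψ (f x) = x) ∧ (∀ y, 0 ≤ y → f (ψ y) = y) := by
  obtain ⟨⟨hcont, hsm, h0⟩, htop⟩ := hf
  have hnn : ∀ x : ℝ, 0 ≤ x → 0 ≤ f x := by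
    intro x hx
    rw [← h0]
    exact hsm.monotoneOn Set.self_mem_Ici hx hx
  set f0 : ℝ≥0 → ℝ≥0 := fun x => ⟨f x, hnn x x.2⟩ with hf0
  have hmono0 : StrictMono f0 := fun a b hab => hsm a.2 b.2 hab
  have hcont0 : Continuous f0 :=
    Continuous.subtype_mk (hcont.comp_continuous continuous_subtype_val (fun x => x.2)) _
  have hsurj0 : Function.Surjective f0 := by
    intro y
    obtain ⟨M, hyM, hM0⟩ := ((tendsto_atTop.mp htop (y:ℝ)).and (eventually_ge_atTop 0)).exists
    have hsub : Set.Icc (0:ℝ) M ⊆ Set.Ici 0 := Set.Icc_subset_Ici_self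
    have hivt := intermediate_value_Icc hM0 (hcont.mono hsub)
    have hy : (y:ℝ) ∈ Set.Icc (f 0) (f M) := ⟨by rw [h0]; exact y.2, hyM⟩
    obtain ⟨x, hx, hfx⟩ := hivt hy
    exact ⟨⟨x, hx.1⟩, Subtype.ext hfx⟩
  set e : ℝ≥0 ≃o ℝ≥0 := StrictMono.orderIsoOfSurjective f0 hmono0 hsurj0 with he
  set ψ : ℝ → ℝ := fun y => ((e.symm (Real.toNNReal y)) : ℝ) with hψ
  have hψcont : Continuous ψ :=
    continuous_subtype_val.comp (e.symm.continuous.comp continuous_real_toNNReal)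
  have hψmono : Monotone ψ := fun a b hab => by
    exact_mod_cast e.symm.monotone (Real.toNNReal_mono hab)
  have hψleft : ∀ x, 0 ≤ x → ψ (f x) = x := by
    intro x hx
    have h1 : Real.toNNReal (f x) = f0 ⟨x, hx⟩ := by
      ext; simp [Real.coe_toNNReal _ (hnn x hx), hf0]; rfl
    rw [hψ]
    simp only [h1]
    have : e.symm (f0 ⟨x, hx⟩) = ⟨x, hx⟩ :=
      StrictMono.orderIsoOfSurjective_symm_apply_self f0 hmono0 hsurj0 ⟨x, hx⟩
    rw [this]; rfl
  have hψright : ∀ y, 0 ≤ y → f (ψ y) = y := by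
    intro y hy
    have : f0 (e.symm (Real.toNNReal y)) = Real.toNNReal y :=
      StrictMono.orderIsoOfSurjective_self_symm_apply f0 hmono0 hsurj0 _
    have h2 := congrArg (Subtype.val) this
    simpa [hf0, Real.coe_toNNReal _ hy] using h2
  have hψ0 : ψ 0 = 0 := by
    have := hψleft 0 le_rfl
    rwa [h0] at this
  have hψnn : ∀ y, 0 ≤ ψ y := fun y => (e.symm (Real.toNNReal y)).2
  have hψsm : StrictMonoOn ψ (Set.Ici 0) := by
    intro a ha b hb hab
    have : Real.toNNReal a < Real.toNNReal b := by
      rwa [Real.toNNReal_lt_toNNReal_iff_of_nonneg ha]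
    exact_mod_cast e.symm.strictMono this
  exact ⟨ψ, hψcont, hψmono, hψsm, hψ0, hψnn, hψleft, hψright⟩

lemma exists_comparison (α : ℝ → ℝ) (hmono : MonotoneOn α (Set.Ici 0))
    (hnn : ∀ v, 0 ≤ v → 0 ≤ α v) (hpos : ∀ v, 0 < v → 0 < α v) :
    ∃ g : ℝ → ℝ, Continuous g ∧ Monotone g ∧ g 0 = 0 ∧
      (∀ v, 0 ≤ v → 0 ≤ g v ∧ g v ≤ v ∧ v - α v / 2 ≤ g v) ∧
      (∀ v0, 0 ≤ v0 → Tendsto (fun k => g^[k] v0) atTop (nhds 0)) := by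
  classical
  set m : ℝ → ℝ := fun w => min w (α w) with hm
  set S : ℝ → Set ℝ := fun v => (fun w => m w + |v - w|) '' Set.Ici 0 with hS
  have hSne : ∀ v, (S v).Nonempty := fun v => ⟨m 0 + |v - 0|, ⟨0, Set.self_mem_Ici, rfl⟩⟩
  have hSbdd : ∀ v, BddBelow (S v) := by
    intro v
    refine ⟨0, ?_⟩
    rintro z ⟨w, hw, rfl⟩
    have h1 : 0 ≤ m w := le_min hw (hnn w hw)
    have h2 : 0 ≤ |v - w| := abs_nonneg _
    show (0:ℝ) ≤ m w + |v - w|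
    linarith
  set ρ : ℝ → ℝ := fun v => sInf (S v) with hρ
  have hρ_le : ∀ v, 0 ≤ v → ρ v ≤ m v := by
    intro v hv
    have : m v + |v - v| ∈ S v := ⟨v, hv, rfl⟩
    simpa using csInf_le (hSbdd v) this
  have hρ_nn : ∀ v, 0 ≤ ρ v := by
    intro v
    apply le_csInf (hSne v)
    rintro z ⟨w, hw, rfl⟩
    have h1 : 0 ≤ m w := le_min hw (hnn w hw)
    have h2 : 0 ≤ |v - w| := abs_nonneg _
    show (0:ℝ) ≤ m w + |v - w|
    linarith
  have hρ_lip : ∀ v v', ρ v' ≤ ρ v + |v' - v| := by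
    intro v v'
    have : sInf (S v') - |v' - v| ≤ sInf (S v) := by
      apply le_csInf (hSne v)
      rintro z ⟨w, hw, rfl⟩
      have hmem : m w + |v' - w| ∈ S v' := ⟨w, hw, rfl⟩
      have h1 : sInf (S v') ≤ m w + |v' - w| := csInf_le (hSbdd v') hmem
      have h2 : |v' - w| ≤ |v - w| + |v' - v| := by
        calc |v' - w| = |(v - w) + (v' - v)| := by ring_nf
          _ ≤ |v - w| + |v' - v| := abs_add_le _ _
      show sInf (S v') - |v' - v| ≤ m w + |v - w|
      linarith
    simp only [hρ]
    linarith
  have habs : ∀ a b : ℝ, |ρ a - ρ b| ≤ |a - b| := by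
    intro a b
    rw [abs_sub_le_iff]
    constructor
    · have := hρ_lip b a
      linarith
    · have := hρ_lip a b
      rw [abs_sub_comm] at this
      linarith
  have hρ_lb : ∀ v, 0 ≤ v → min (v / 2) (α (v / 2)) ≤ ρ v := by
    intro v hv
    apply le_csInf (hSne v)
    rintro z ⟨w, hw, rfl⟩
    show min (v / 2) (α (v / 2)) ≤ m w + |v - w|
    have hw' : (0:ℝ) ≤ w := hw
    rcases le_or_gt w (v / 2) with h | h
    · have h1 : v / 2 ≤ |v - w| := by
        rw [abs_of_nonneg (by linarith)]
        linarith
      have h2 : 0 ≤ m w := le_min hw' (hnn w hw')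
      have h3 : min (v / 2) (α (v / 2)) ≤ v / 2 := min_le_left _ _
      linarith
    · have h1 : min (v / 2) (α (v / 2)) ≤ m w := by
        apply le_min
        · exact (min_le_left _ _).trans h.le
        · exact (min_le_right _ _).trans
            (hmono (Set.mem_Ici.mpr (by positivity)) (Set.mem_Ici.mpr hw') h.le)
      have h2 : 0 ≤ |v - w| := abs_nonneg _
      linarith
  set g : ℝ → ℝ := fun v => v - ρ v / 2 with hg
  have hg_mono : Monotone g := by
    intro a b hab
    have h1 : ρ b ≤ ρ a + |b - a| := hρ_lip a b
    rw [abs_of_nonneg (by linarith)] at h1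
    show a - ρ a / 2 ≤ b - ρ b / 2
    linarith
  have hρ_cont : Continuous ρ := by
    have : LipschitzWith 1 ρ := by
      apply LipschitzWith.of_dist_le_mul
      intro a b
      rw [Real.dist_eq, Real.dist_eq, NNReal.coe_one, one_mul]
      exact habs a b
    exact this.continuous
  have hg_cont : Continuous g := continuous_id.sub (hρ_cont.div_const 2)
  have hρ_0 : ρ 0 = 0 := by
    have h1 := hρ_le 0 le_rfl
    have h2 := hρ_nn 0
    have : m 0 ≤ 0 := min_le_left _ _
    linarith
  have hg_0 : g 0 = 0 := by simp [hg, hρ_0]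
  have hg_bound : ∀ v, 0 ≤ v → 0 ≤ g v ∧ g v ≤ v ∧ v - α v / 2 ≤ g v := by
    intro v hv
    have h1 := hρ_le v hv
    have h2 := hρ_nn v
    have h3 : m v ≤ v := min_le_left _ _
    have h4 : m v ≤ α v := min_le_right _ _
    refine ⟨?_, ?_, ?_⟩ <;> show _ ≤ _ <;> simp only [hg] <;> linarith
  refine ⟨g, hg_cont, hg_mono, hg_0, hg_bound, ?_⟩
  intro v0 hv0
  have hiter_nn : ∀ k, 0 ≤ g^[k] v0 := by
    intro k
    induction k with
    | zero => simpa using hv0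
    | succ k ih =>
      rw [Function.iterate_succ_apply']
      exact (hg_bound _ ih).1
  have hiter_succ : ∀ k, g^[k + 1] v0 ≤ g^[k] v0 := by
    intro k
    rw [Function.iterate_succ_apply']
    exact (hg_bound _ (hiter_nn k)).2.1
  have hiter_anti : Antitone (fun k => g^[k] v0) := antitone_nat_of_succ_le hiter_succ
  have key : ∀ ε : ℝ, 0 < ε → ∃ K, g^[K] v0 ≤ ε := by
    intro ε hε
    by_contra hcon
    push_neg at hcon
    set δ : ℝ := min (ε / 2) (α (ε / 2)) / 2 with hδdef
    have hδ : 0 < δ := by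
      have := hpos (ε / 2) (by linarith)
      have : 0 < min (ε / 2) (α (ε / 2)) := lt_min (by linarith) this
      positivity
    have hdec : ∀ k, g^[k + 1] v0 ≤ g^[k] v0 - δ := by
      intro k
      have hvk := hiter_nn k
      have hεk : ε ≤ g^[k] v0 := (hcon k).le
      have hlb := hρ_lb (g^[k] v0) hvk
      have hmm : min (ε / 2) (α (ε / 2)) ≤ min (g^[k] v0 / 2) (α (g^[k] v0 / 2)) := by
        apply le_min
        · exact (min_le_left _ _).trans (by linarith)
        · exact (min_le_right _ _).trans
            (hmono (Set.mem_Ici.mpr (by linarith)) (Set.mem_Ici.mpr (by linarith)) (by linarith))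
      rw [Function.iterate_succ_apply']
      show g^[k] v0 - ρ (g^[k] v0) / 2 ≤ g^[k] v0 - δ
      rw [hδdef]
      linarith
    have hsum : ∀ k : ℕ, g^[k] v0 ≤ v0 - k * δ := by
      intro k
      induction k with
      | zero => simp
      | succ k ih =>
        have := hdec k
        push_cast
        calc g^[k + 1] v0 ≤ g^[k] v0 - δ := this
          _ ≤ v0 - k * δ - δ := by linarith
          _ = v0 - (k + 1) * δ := by ring
    obtain ⟨k, hk⟩ := exists_nat_gt (v0 / δ)
    have h1 : v0 < k * δ := by
      rwa [div_lt_iff₀ hδ] at hk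
    have h2 := hsum k
    have h3 := hiter_nn k
    linarith
  rw [Metric.tendsto_atTop]
  intro ε hε
  obtain ⟨K, hK⟩ := key (ε / 2) (by linarith)
  refine ⟨K, fun n hn => ?_⟩
  have h1 : g^[n] v0 ≤ g^[K] v0 := hiter_anti hn
  have h2 := hiter_nn n
  rw [Real.dist_eq]
  rw [abs_of_nonneg (by linarith)]
  linarith

/-- **Dissipation-form δISS Lyapunov functions imply δISS** (Theorem 1 of the paper,
after Tran et al.): if the system `x(k+1) = F(x(k),u(k))` admits a nonnegative `V`
sandwiched between two `K∞` functions of `‖x1 - x2‖` and decreasing along pairs of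
trajectories up to a class-`K` gain of `‖u1 - u2‖`, then the system is δISS. -/
theorem deltaISS_of_dissipation_lyapunov
    (n m : ℕ) (F : (Fin n → ℝ) → (Fin m → ℝ) → (Fin n → ℝ))
    (V : (Fin n → ℝ) → (Fin n → ℝ) → ℝ)
    (hV0 : ∀ x1 x2, 0 ≤ V x1 x2)
    (ξ1 ξ2 ξ σ : ℝ → ℝ)
    (hξ1 : IsKInfFun ξ1) (hξ2 : IsKInfFun ξ2) (hξ : IsKInfFun ξ) (hσ : IsKFun σ)
    (hsandwich : ∀ x1 x2 : Fin n → ℝ,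
      ξ1 (eNorm (x1 - x2)) ≤ V x1 x2 ∧ V x1 x2 ≤ ξ2 (eNorm (x1 - x2)))
    (hdecr : ∀ (x1 x2 : Fin n → ℝ) (u1 u2 : Fin m → ℝ),
      V (F x1 u1) (F x2 u2) - V x1 x2 ≤ - ξ (eNorm (x1 - x2)) + σ (eNorm (u1 - u2))) :
    DeltaISS F := by
  obtain ⟨ψ1, hψ1c, hψ1m, hψ1sm, hψ10, hψ1nn, hψ1l, hψ1r⟩ := exists_kinf_inverse ξ1 hξ1
  obtain ⟨ψ2, hψ2c, hψ2m, hψ2sm, hψ20, hψ2nn, hψ2l, hψ2r⟩ := exists_kinf_inverse ξ2 hξ2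
  obtain ⟨ψ, hψc, hψm, hψsm, hψ0, hψnn, hψl, hψr⟩ := exists_kinf_inverse ξ hξ
  have eNorm_nonneg : ∀ {ι : Type} [Fintype ι] (v : ι → ℝ), 0 ≤ eNorm v :=
    fun v => Real.sqrt_nonneg _
  have hξ2mono : MonotoneOn ξ2 (Set.Ici 0) := hξ2.1.2.1.monotoneOn
  have hξmono : MonotoneOn ξ (Set.Ici 0) := hξ.1.2.1.monotoneOn
  have hξ2nn : ∀ v, 0 ≤ v → 0 ≤ ξ2 v := by
    intro v hv
    rw [← hξ2.1.2.2]
    exact hξ2mono Set.self_mem_Ici hv hv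
  have hξnn : ∀ v, 0 ≤ v → 0 ≤ ξ v := by
    intro v hv
    rw [← hξ.1.2.2]
    exact hξmono Set.self_mem_Ici hv hv
  have hσnn : ∀ v, 0 ≤ v → 0 ≤ σ v := by
    intro v hv
    rw [← hσ.2.2]
    exact hσ.2.1.monotoneOn Set.self_mem_Ici hv hv
  set α : ℝ → ℝ := fun v => ξ (ψ2 v) with hα
  have hα_mono : MonotoneOn α (Set.Ici 0) := fun a _ b _ hab =>
    hξmono (Set.mem_Ici.mpr (hψ2nn a)) (Set.mem_Ici.mpr (hψ2nn b)) (hψ2m hab)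
  have hα_nn : ∀ v, 0 ≤ v → 0 ≤ α v := fun v _ => hξnn _ (hψ2nn v)
  have hα_pos : ∀ v, 0 < v → 0 < α v := by
    intro v hv
    have h1 : ψ2 0 < ψ2 v := hψ2sm Set.self_mem_Ici (Set.mem_Ici.mpr hv.le) hv
    rw [hψ20] at h1
    have := hξ.1.2.1 Set.self_mem_Ici (Set.mem_Ici.mpr h1.le) h1
    rwa [hξ.1.2.2] at this
  obtain ⟨g, hgc, hgm, hg0, hgb, hgt⟩ := exists_comparison α hα_mono hα_nn hα_pos
  have hgiter_nn : ∀ (k : ℕ) (w : ℝ), 0 ≤ w → 0 ≤ g^[k] w := by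
    intro k w hw
    induction k with
    | zero => simpa using hw
    | succ k ih =>
      rw [Function.iterate_succ_apply']
      exact (hgb _ ih).1
  refine ⟨fun s k => ψ1 (g^[k] (ξ2 s)) + s / (k + 1),
    fun d => ψ1 (ξ2 (ψ (2 * σ d)) + σ d) + d, ?_, ?_, ?_⟩
  · -- IsKLFun β
    refine ⟨?_, ?_, ?_, ?_, ?_⟩
    · intro k
      exact ((hψ1c.comp (hgc.iterate k)).comp_continuousOn hξ2.1.1).add
        ((continuous_id.div_const _).continuousOn)
    · intro k a ha b hb hab
      have h1 : ψ1 (g^[k] (ξ2 a)) ≤ ψ1 (g^[k] (ξ2 b)) :=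
        hψ1m ((hgm.iterate k) (hξ2mono ha hb hab.le))
      have h2 : a / ((k : ℝ) + 1) < b / ((k : ℝ) + 1) := by
        apply div_lt_div_of_pos_right hab
        positivity
      show ψ1 (g^[k] (ξ2 a)) + a / ((k : ℝ) + 1) < ψ1 (g^[k] (ξ2 b)) + b / ((k : ℝ) + 1)
      linarith
    · intro k
      show ψ1 (g^[k] (ξ2 0)) + (0:ℝ) / ((k:ℝ) + 1) = 0
      rw [hξ2.1.2.2, Function.iterate_fixed hg0, hψ10, zero_div, add_zero]
    · intro s hs
      apply strictAnti_nat_of_succ_lt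
      intro k
      have hξ2s : 0 ≤ ξ2 s := hξ2nn s hs.le
      have h1 : ψ1 (g^[k + 1] (ξ2 s)) ≤ ψ1 (g^[k] (ξ2 s)) := by
        apply hψ1m
        rw [Function.iterate_succ_apply']
        exact (hgb _ (hgiter_nn k _ hξ2s)).2.1
      have h2 : s / ((k : ℝ) + 1 + 1) < s / ((k : ℝ) + 1) := by
        apply div_lt_div_of_pos_left hs (by positivity)
        linarith
      beta_reduce
      push_cast
      push_cast at h2
      linarith
    · intro s hs
      have hξ2s : 0 ≤ ξ2 s := hξ2nn s hs.le
      have t1 : Tendsto (fun k : ℕ => ψ1 (g^[k] (ξ2 s))) atTop (nhds 0) := by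
        have := (hψ1c.tendsto 0).comp (hgt (ξ2 s) hξ2s)
        rwa [hψ10] at this
      have t2 : Tendsto (fun k : ℕ => s / ((k : ℝ) + 1)) atTop (nhds 0) := by
        have heq : (fun k : ℕ => s / ((k : ℝ) + 1)) =
            (fun n : ℕ => s / (n : ℝ)) ∘ (fun a : ℕ => a + 1) := by
          funext a
          simp only [Function.comp_apply]
          push_cast
          ring
        rw [heq]
        exact (tendsto_const_div_atTop_nhds_zero_nat s).comp (tendsto_add_atTop_nat 1)
      simpa using t1.add t2
  · -- IsKInfFun γ
    refine ⟨⟨?_, ?_, ?_⟩, ?_⟩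
    · have c1 : ContinuousOn (fun d => 2 * σ d) (Set.Ici 0) :=
        continuousOn_const.mul hσ.1
      have c2 : ContinuousOn (fun d => ψ (2 * σ d)) (Set.Ici 0) :=
        hψc.comp_continuousOn c1
      have c3 : ContinuousOn (fun d => ξ2 (ψ (2 * σ d))) (Set.Ici 0) :=
        hξ2.1.1.comp c2 (fun d _ => Set.mem_Ici.mpr (hψnn _))
      exact ((hψ1c.comp_continuousOn (c3.add hσ.1))).add continuousOn_id
    · intro a ha b hb hab
      have hσa : 0 ≤ σ a := hσnn a ha
      have hσb : 0 ≤ σ b := hσnn b hb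
      have h1 : σ a < σ b := hσ.2.1 ha hb hab
      have h2 : ψ (2 * σ a) < ψ (2 * σ b) :=
        hψsm (Set.mem_Ici.mpr (by linarith)) (Set.mem_Ici.mpr (by linarith)) (by linarith)
      have h3 : ξ2 (ψ (2 * σ a)) < ξ2 (ψ (2 * σ b)) :=
        hξ2.1.2.1 (Set.mem_Ici.mpr (hψnn _)) (Set.mem_Ici.mpr (hψnn _)) h2
      have h4 : ψ1 (ξ2 (ψ (2 * σ a)) + σ a) < ψ1 (ξ2 (ψ (2 * σ b)) + σ b) := by
        apply hψ1sm
        · exact Set.mem_Ici.mpr (add_nonneg (hξ2nn _ (hψnn _)) hσa)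
        · exact Set.mem_Ici.mpr (add_nonneg (hξ2nn _ (hψnn _)) hσb)
        · linarith
      show ψ1 (ξ2 (ψ (2 * σ a)) + σ a) + a < ψ1 (ξ2 (ψ (2 * σ b)) + σ b) + b
      linarith
    · show ψ1 (ξ2 (ψ (2 * σ 0)) + σ 0) + 0 = 0
      simp [hσ.2.2, hψ0, hξ2.1.2.2, hψ10]
    · apply tendsto_atTop_mono (fun d => ?_) tendsto_id
      exact le_add_of_nonneg_left (hψ1nn _)
  · -- the trajectory bound
    intro k x01 x02 d hd u1 u2 hu
    set s : ℝ := eNorm (x01 - x02) with hsdef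
    have hs : 0 ≤ s := eNorm_nonneg _
    have hσd : 0 ≤ σ d := hσnn d hd
    set b : ℝ := ξ2 (ψ (2 * σ d)) + σ d with hbdef
    have hξ2ψ : 0 ≤ ξ2 (ψ (2 * σ d)) := hξ2nn _ (hψnn _)
    have hbnn : 0 ≤ b := by rw [hbdef]; linarith
    have key : ∀ j : ℕ, V (traj F x01 u1 j) (traj F x02 u2 j) ≤
        max (g^[j] (V x01 x02)) b := by
      intro j
      induction j with
      | zero =>
        show V x01 x02 ≤ max (g^[0] (V x01 x02)) b
        rw [Function.iterate_zero_apply]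
        exact le_max_left _ _
      | succ j ih =>
        set Vj := V (traj F x01 u1 j) (traj F x02 u2 j) with hVj
        set nj := eNorm (traj F x01 u1 j - traj F x02 u2 j) with hnj
        have hnjnn : 0 ≤ nj := eNorm_nonneg _
        have hdecr' := hdecr (traj F x01 u1 j) (traj F x02 u2 j) (u1 j) (u2 j)
        have hσu : σ (eNorm (u1 j - u2 j)) ≤ σ d :=
          hσ.2.1.monotoneOn (Set.mem_Ici.mpr (eNorm_nonneg _)) (Set.mem_Ici.mpr hd) (hu j)
        have hsand1 : ξ1 nj ≤ Vj := (hsandwich _ _).1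
        have hsand2 : Vj ≤ ξ2 nj := (hsandwich _ _).2
        have hξnjnn : 0 ≤ ξ nj := hξnn _ hnjnn
        have hstep : V (traj F x01 u1 (j + 1)) (traj F x02 u2 (j + 1)) ≤
            Vj - ξ nj + σ d := by
          show V (F (traj F x01 u1 j) (u1 j)) (F (traj F x02 u2 j) (u2 j)) ≤ Vj - ξ nj + σ d
          have := hdecr'
          linarith
        by_cases hc : Vj ≤ b
        · refine le_trans ?_ (le_max_right _ _)
          by_cases hn : nj ≤ ψ (2 * σ d)
          · have h5 : ξ2 nj ≤ ξ2 (ψ (2 * σ d)) :=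
              hξ2mono (Set.mem_Ici.mpr hnjnn) (Set.mem_Ici.mpr (hψnn _)) hn
            rw [hbdef]
            linarith
          · push_neg at hn
            have h6 : ξ (ψ (2 * σ d)) ≤ ξ nj :=
              hξmono (Set.mem_Ici.mpr (hψnn _)) (Set.mem_Ici.mpr hnjnn) hn.le
            rw [hψr (2 * σ d) (by linarith)] at h6
            linarith
        · push_neg at hc
          have hVjA : Vj ≤ g^[j] (V x01 x02) := by
            rcases le_max_iff.mp ih with h | h
            · exact h
            · exact absurd h (by linarith)
          refine le_trans ?_ (le_max_left _ _)
          rw [Function.iterate_succ_apply']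
          have hVjnn : 0 ≤ Vj := hV0 _ _
          have h1 : ψ2 Vj ≤ nj := by
            have := hψ2m hsand2
            rwa [hψ2l nj hnjnn] at this
          have h2 : ξ (ψ2 Vj) ≤ ξ nj :=
            hξmono (Set.mem_Ici.mpr (hψ2nn _)) (Set.mem_Ici.mpr hnjnn) h1
          have h3 : ψ (2 * σ d) < nj := by
            by_contra hcon
            push_neg at hcon
            have h7 : ξ2 nj ≤ ξ2 (ψ (2 * σ d)) :=
              hξ2mono (Set.mem_Ici.mpr hnjnn) (Set.mem_Ici.mpr (hψnn _)) hcon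
            rw [hbdef] at hc
            linarith
          have h4 : 2 * σ d ≤ ξ nj := by
            rw [← hψr (2 * σ d) (by linarith)]
            exact hξmono (Set.mem_Ici.mpr (hψnn _)) (Set.mem_Ici.mpr hnjnn) h3.le
          have h5 : V (traj F x01 u1 (j + 1)) (traj F x02 u2 (j + 1)) ≤
              Vj - ξ (ψ2 Vj) / 2 := by linarith
          have h6 : Vj - α Vj / 2 ≤ g Vj := (hgb Vj hVjnn).2.2
          have h7 : g Vj ≤ g (g^[j] (V x01 x02)) := hgm hVjA
          rw [hα] at h6
          linarith
    have hk := key k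
    set nk := eNorm (traj F x01 u1 k - traj F x02 u2 k) with hnk
    have hnknn : 0 ≤ nk := eNorm_nonneg _
    have hx1 : ξ1 nk ≤ max (g^[k] (V x01 x02)) b :=
      le_trans (hsandwich _ _).1 hk
    have hx2 : nk ≤ ψ1 (max (g^[k] (V x01 x02)) b) := by
      have := hψ1m hx1
      rwa [hψ1l nk hnknn] at this
    have hx3 : ψ1 (max (g^[k] (V x01 x02)) b) ≤ ψ1 (g^[k] (V x01 x02)) + ψ1 b := by
      rcases max_choice (g^[k] (V x01 x02)) b with h | h <;> rw [h]
      · exact le_add_of_nonneg_right (hψ1nn _)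
      · exact le_add_of_nonneg_left (hψ1nn _)
    have hx4 : ψ1 (g^[k] (V x01 x02)) ≤ ψ1 (g^[k] (ξ2 s)) :=
      hψ1m ((hgm.iterate k) (hsandwich x01 x02).2)
    have hx5 : (0:ℝ) ≤ s / ((k : ℝ) + 1) := by positivity
    show nk ≤ ψ1 (g^[k] (ξ2 s)) + s / ((k : ℝ) + 1) + (ψ1 b + d)
    linarith
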